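/- Gaussian integral identity: for all reals a, b, h, k with h \le k, \int_h^k \phi(x)\Phi(a + b x) dx = \int_{-\infty}^{a/\sqrt{b^2+1}} \phi(x)\Phi(k\sqrt{b^2+1} + b x) dx - \int_{-\infty}^{a/\sqrt{b^2+1}} \phi(x)\Phi(h\sqrt{b^2+1} + b x) dx. -/

import Mathlib

open MeasureTheory

/-- Standard normal p.d.f. -/
noncomputable def stdPdf (x : ℝ) : ℝ :=
  (Real.sqrt (2 * Real.pi))⁻¹ * Real.exp (-x ^ 2 / 2)

/-- Standard normal c.d.f. -/
noncomputable def stdCdf (x : ℝ) : ℝ := ∫ t in Set.Iic x, stdPdf t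

open Set

lemma stdPdf_eq : stdPdf = fun x => (Real.sqrt (2 * Real.pi))⁻¹ * Real.exp (-(1/2) * x ^ 2) := by
  funext x; unfold stdPdf; ring_nf

lemma stdPdf_nonneg (x : ℝ) : 0 ≤ stdPdf x :=
  mul_nonneg (inv_nonneg.2 (Real.sqrt_nonneg _)) (Real.exp_pos _).le

lemma stdPdf_le (x : ℝ) : stdPdf x ≤ (Real.sqrt (2 * Real.pi))⁻¹ := by
  unfold stdPdf
  have h1 : Real.exp (-x ^ 2 / 2) ≤ 1 := Real.exp_le_one_iff.2 (by nlinarith [sq_nonneg x])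
  have h2 : (0:ℝ) ≤ (Real.sqrt (2 * Real.pi))⁻¹ := inv_nonneg.2 (Real.sqrt_nonneg _)
  nlinarith [Real.exp_pos (-x ^ 2 / 2)]

lemma continuous_stdPdf : Continuous stdPdf := by
  unfold stdPdf; fun_prop

lemma integrable_stdPdf : Integrable stdPdf := by
  rw [stdPdf_eq]
  exact (integrable_exp_neg_mul_sq (by norm_num : (0:ℝ) < 1/2)).const_mul _

lemma integral_stdPdf : ∫ x, stdPdf x = 1 := by
  rw [stdPdf_eq, integral_const_mul, integral_gaussian]
  have : Real.pi / (1/2) = 2 * Real.pi := by ring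
  rw [this]
  exact inv_mul_cancel₀ (Real.sqrt_ne_zero'.2 (by positivity))

lemma stdCdf_nonneg (x : ℝ) : 0 ≤ stdCdf x :=
  setIntegral_nonneg measurableSet_Iic fun t _ => stdPdf_nonneg t

lemma stdCdf_le_one (x : ℝ) : stdCdf x ≤ 1 := by
  rw [← integral_stdPdf]
  exact setIntegral_le_integral integrable_stdPdf
    (Filter.Eventually.of_forall fun t => stdPdf_nonneg t)

lemma monotone_stdCdf : Monotone stdCdf := fun x y hxy =>
  setIntegral_mono_set integrable_stdPdf.integrableOn
    (Filter.Eventually.of_forall fun t => stdPdf_nonneg t)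
    (HasSubset.Subset.eventuallyLE (Iic_subset_Iic.2 hxy))

lemma measurable_stdCdf : Measurable stdCdf := monotone_stdCdf.measurable

lemma integrableOn_pdf_mul_cdf (c d e : ℝ) :
    IntegrableOn (fun x => stdPdf x * stdCdf (d + e * x)) (Iic c) := by
  apply Integrable.mono' (integrable_stdPdf.restrict)
  · exact (continuous_stdPdf.measurable.mul
      (measurable_stdCdf.comp (by fun_prop))).aestronglyMeasurable
  · filter_upwards with x
    rw [Real.norm_eq_abs, abs_of_nonneg (mul_nonneg (stdPdf_nonneg x) (stdCdf_nonneg _))]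
    calc stdPdf x * stdCdf (d + e * x) ≤ stdPdf x * 1 :=
          mul_le_mul_of_nonneg_left (stdCdf_le_one _) (stdPdf_nonneg x)
      _ = stdPdf x := mul_one _

/-- Affine substitution on `Iic`. -/
lemma integral_Iic_comp_mul_add (g : ℝ → ℝ) {s : ℝ} (hs : 0 < s) (d c : ℝ) :
    ∫ x in Iic c, g (s * x + d) = s⁻¹ * ∫ t in Iic (s * c + d), g t := by
  have hpre : (fun x : ℝ => s * x + d) ⁻¹' Iic (s * c + d) = Iic c := by
    ext x
    simp only [mem_preimage, mem_Iic]
    constructor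
    · intro hx; nlinarith
    · intro hx; nlinarith
  rw [← integral_indicator measurableSet_Iic, ← integral_indicator measurableSet_Iic]
  have hind : ∀ x : ℝ, (Iic c).indicator (fun x => g (s * x + d)) x
      = (Iic (s * c + d)).indicator g (s * x + d) := by
    intro x
    rw [← hpre]
    exact Set.indicator_comp_right (fun x : ℝ => s * x + d) (g := g)
  simp_rw [hind]
  have h1 : (∫ x : ℝ, (Iic (s * c + d)).indicator g (s * x + d)) =
      ∫ x : ℝ, ((fun y => (Iic (s * c + d)).indicator g (y + d)) (s * x)) := rfl
  rw [h1, MeasureTheory.Measure.integral_comp_mul_left (fun y => (Iic (s * c + d)).indicator g (y + d)) s,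
    integral_add_right_eq_self, abs_of_pos (inv_pos.2 hs), smul_eq_mul]

/-- Gaussian rotation identity. -/
lemma stdPdf_rotate {b s : ℝ} (hs2 : s ^ 2 = b ^ 2 + 1) (u x : ℝ) :
    stdPdf x * stdPdf (s * u + b * x) = stdPdf u * stdPdf (s * x + b * u) := by
  unfold stdPdf
  rw [mul_mul_mul_comm, ← Real.exp_add, mul_mul_mul_comm, ← Real.exp_add]
  congr 1
  rw [Real.exp_eq_exp]
  linear_combination ((x ^ 2 - u ^ 2) / 2) * hs2

/-- Owen's identity 10,010.4:
∫_h^k φ(x)Φ(a+bx) dx = ∫_{-∞}^{a/√(b²+1)} φ(x)Φ(k√(b²+1)+bx) dx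
  - ∫_{-∞}^{a/√(b²+1)} φ(x)Φ(h√(b²+1)+bx) dx. -/
theorem owen_10010_4 (a b h k : ℝ) (hhk : h ≤ k) :
    (∫ x in h..k, stdPdf x * stdCdf (a + b * x)) =
      (∫ x in Set.Iic (a / Real.sqrt (b ^ 2 + 1)),
          stdPdf x * stdCdf (k * Real.sqrt (b ^ 2 + 1) + b * x)) -
        ∫ x in Set.Iic (a / Real.sqrt (b ^ 2 + 1)),
          stdPdf x * stdCdf (h * Real.sqrt (b ^ 2 + 1) + b * x) := by
  set s : ℝ := Real.sqrt (b ^ 2 + 1) with hs_def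
  have hs2 : s ^ 2 = b ^ 2 + 1 := Real.sq_sqrt (by positivity)
  have hs : 0 < s := Real.sqrt_pos.2 (by positivity)
  set c : ℝ := a / s with hc_def
  have hsc : s * c = a := by rw [hc_def]; field_simp [hs.ne']
  -- combine the two RHS integrals
  rw [← integral_sub (integrableOn_pdf_mul_cdf c (k * s) b) (integrableOn_pdf_mul_cdf c (h * s) b)]
  -- rewrite integrand as a double integral
  have key : ∀ x : ℝ, stdPdf x * stdCdf (k * s + b * x) - stdPdf x * stdCdf (h * s + b * x)
      = ∫ u in Ioc h k, stdPdf x * (s * stdPdf (s * u + b * x)) := by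
    intro x
    rw [← mul_sub]
    have h1 : stdCdf (k * s + b * x) - stdCdf (h * s + b * x)
        = ∫ t in (h * s + b * x)..(k * s + b * x), stdPdf t :=
      intervalIntegral.integral_Iic_sub_Iic integrable_stdPdf.integrableOn
        integrable_stdPdf.integrableOn
    have h2 : (∫ u in h..k, stdPdf (s * u + b * x))
        = s⁻¹ • ∫ t in (s * h + b * x)..(s * k + b * x), stdPdf t :=
      intervalIntegral.integral_comp_mul_add stdPdf hs.ne' (b * x)
    have h3 : (∫ t in (h * s + b * x)..(k * s + b * x), stdPdf t)
        = s * ∫ u in h..k, stdPdf (s * u + b * x) := by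
      rw [h2, smul_eq_mul, ← mul_assoc, mul_inv_cancel₀ hs.ne', one_mul,
        mul_comm s h, mul_comm s k]
    rw [h1, h3, intervalIntegral.integral_of_le hhk, ← integral_const_mul,
      ← integral_const_mul]
  rw [setIntegral_congr_fun measurableSet_Iic fun x _ => key x]
  -- Fubini
  have hswap : (∫ x in Iic c, ∫ u in Ioc h k, stdPdf x * (s * stdPdf (s * u + b * x)))
      = ∫ u in Ioc h k, ∫ x in Iic c, stdPdf x * (s * stdPdf (s * u + b * x)) := by
    apply MeasureTheory.integral_integral_swap
    apply Integrable.mono' (g := fun p : ℝ × ℝ => stdPdf p.1 * (s * (Real.sqrt (2 * Real.pi))⁻¹))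
    · exact (integrable_stdPdf.restrict).mul_prod (integrable_const _)
    · apply Continuous.aestronglyMeasurable
      apply (continuous_stdPdf.comp continuous_fst).mul
      exact continuous_const.mul (continuous_stdPdf.comp (by fun_prop))
    · filter_upwards with p
      rw [Function.uncurry, Real.norm_eq_abs, abs_of_nonneg (mul_nonneg (stdPdf_nonneg _)
        (mul_nonneg hs.le (stdPdf_nonneg _)))]
      exact mul_le_mul_of_nonneg_left
        (mul_le_mul_of_nonneg_left (stdPdf_le _) hs.le) (stdPdf_nonneg _)
  rw [hswap]
  -- compute the inner integral
  have inner : ∀ u : ℝ, (∫ x in Iic c, stdPdf x * (s * stdPdf (s * u + b * x)))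
      = stdPdf u * stdCdf (a + b * u) := by
    intro u
    have e1 : ∀ x : ℝ, stdPdf x * (s * stdPdf (s * u + b * x))
        = stdPdf u * s * stdPdf (s * x + b * u) := by
      intro x
      rw [show stdPdf x * (s * stdPdf (s * u + b * x))
          = s * (stdPdf x * stdPdf (s * u + b * x)) by ring, stdPdf_rotate hs2]
      ring
    simp_rw [e1]
    rw [integral_const_mul, integral_Iic_comp_mul_add stdPdf hs (b * u) c, hsc]
    rw [show stdPdf u * s * (s⁻¹ * ∫ t in Iic (a + b * u), stdPdf t)
      = stdPdf u * (s * s⁻¹) * ∫ t in Iic (a + b * u), stdPdf t by ring,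
      mul_inv_cancel₀ hs.ne', mul_one]
    rfl
  rw [setIntegral_congr_fun measurableSet_Ioc fun u _ => inner u,
    ← intervalIntegral.integral_of_le hhk]
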